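/- Let (W,S) be a Coxeter system with S finite. Then the center Z(W) of the Coxeter group W is a finite group. -/
import Mathlib

namespace CoxeterCenter

open CoxeterSystem List

open scoped Classical

variable {B : Type*} {W : Type*} [Group W] {M : CoxeterMatrix B} (cs : CoxeterSystem M W)

local prefix:100 "s" => cs.simple
local prefix:100 "π" => cs.wordProd
local prefix:100 "ℓ" => cs.length

noncomputable def tokFun (i : B) (p : W × ℤˣ) : W × ℤˣ :=
  (s i * p.1 * s i, p.2 * (if p.1 = s i then -1 else 1))

lemma simple_conj_eq_simple_iff (i : B) (t : W) : (s i * t * s i = s i) ↔ (t = s i) := by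
  constructor
  · intro hh
    have := congrArg (fun x => s i * (x * (s i)⁻¹)) hh
    simpa [mul_assoc, ← mul_assoc, cs.simple_mul_simple_cancel_left] using this
  · rintro rfl; simp [cs.simple_mul_simple_self]

lemma tokFun_involutive (i : B) : Function.Involutive (tokFun cs i) := by
  rintro ⟨t, ε⟩
  unfold tokFun
  simp only [simple_conj_eq_simple_iff]
  have h : s i * (s i * t * s i) * s i = t := by
    calc s i * (s i * t * s i) * s i = (s i * s i) * t * (s i * s i) := by group
    _ = t := by rw [cs.simple_mul_simple_self]; group
  rw [h]
  by_cases ht : t = s i <;> simp [ht, mul_assoc]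

/-- The basic sign permutation of the Bourbaki reflection bookkeeping action. -/
noncomputable def tok (i : B) : Equiv.Perm (W × ℤˣ) := (tokFun_involutive cs i).toPerm

lemma tok_apply (i : B) (t : W) (ε : ℤˣ) :
    tok cs i (t, ε) = (s i * t * s i, ε * (if t = s i then -1 else 1)) := rfl

/-- Product of toks along a word. -/
noncomputable def F (ω : List B) : Equiv.Perm (W × ℤˣ) := (ω.map (tok cs)).prod

lemma F_nil : F cs [] = 1 := rfl

lemma F_cons (i : B) (ω : List B) : F cs (i :: ω) = tok cs i * F cs ω := by
  simp [F]

lemma F_apply (ω : List B) (t : W) (ε : ℤˣ) :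
    F cs ω (t, ε) = (π ω * t * (π ω)⁻¹,
      ε * (-1 : ℤˣ) ^ (List.count t (cs.rightInvSeq ω))) := by
  induction ω generalizing t ε with
  | nil => simp [F_nil]
  | cons i ω ih =>
    rw [F_cons]
    have h0 : (tok cs i * F cs ω) (t, ε) = tok cs i (F cs ω (t, ε)) := rfl
    rw [h0, ih, tok_apply]
    have hcond : (π ω * t * (π ω)⁻¹ = s i) ↔ (t = (π ω)⁻¹ * s i * π ω) := by
      constructor
      · intro h; rw [← h]; group
      · intro h; rw [h]; group
    have hris : cs.rightInvSeq (i :: ω) = ((π ω)⁻¹ * s i * π ω) :: cs.rightInvSeq ω := rfl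
    refine Prod.ext ?_ ?_
    · show s i * (π ω * t * (π ω)⁻¹) * s i = π (i :: ω) * t * (π (i :: ω))⁻¹
      rw [cs.wordProd_cons, mul_inv_rev, cs.inv_simple]
      group
    · show ε * (-1:ℤˣ) ^ _ * _ = ε * (-1:ℤˣ) ^ _
      rw [hris, List.count_cons]
      by_cases hc : t = (π ω)⁻¹ * s i * π ω
      · rw [if_pos (hcond.mpr hc)]
        simp only [hc, beq_self_eq_true, if_true]
        rw [pow_add, pow_one, mul_assoc]
      · rw [if_neg (fun h => hc (hcond.mp h))]
        have hb : ((π ω)⁻¹ * s i * π ω == t) = false := beq_eq_false_iff_ne.mpr (Ne.symm hc)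
        rw [hb]
        simp
  
lemma simple_conj_pow (i i' : B) (k : ℕ) :
    s i' * (s i * s i') ^ k = ((s i * s i') ^ k)⁻¹ * s i' := by
  have hbase : s i' * (s i * s i') * (s i')⁻¹ = (s i * s i')⁻¹ := by
    rw [cs.inv_simple, mul_inv_rev, cs.inv_simple, cs.inv_simple]
    rw [← mul_assoc, mul_assoc (s i' * s i), cs.simple_mul_simple_self, mul_one]
  have h : s i' * (s i * s i') ^ k * (s i')⁻¹ = ((s i * s i') ^ k)⁻¹ := by
    rw [← conj_pow, hbase, inv_pow]
  calc s i' * (s i * s i') ^ k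
      = (s i' * (s i * s i') ^ k * (s i')⁻¹) * s i' := by group
    _ = ((s i * s i') ^ k)⁻¹ * s i' := by rw [h]

lemma key_conj (i i' : B) (n : ℕ) :
    (π (alternatingWord i i' n))⁻¹ * π (alternatingWord i i' (n+1))
      = ((s i * s i') ^ n)⁻¹ * s i' := by
  rw [cs.prod_alternatingWord_eq_mul_pow, cs.prod_alternatingWord_eq_mul_pow]
  rcases Nat.even_or_odd n with he | ho
  · obtain ⟨k, hk⟩ := he
    have h1 : ¬ Even (n+1) := fun h => (Nat.even_add_one.mp h) ⟨k, hk⟩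
    have h2 : (n+1)/2 = k := by omega
    have h3 : n/2 = k := by omega
    rw [if_pos ⟨k, hk⟩, if_neg h1, h2, h3, one_mul]
    calc ((s i * s i') ^ k)⁻¹ * (s i' * (s i * s i') ^ k)
        = ((s i * s i') ^ k)⁻¹ * (((s i * s i') ^ k)⁻¹ * s i') := by
          rw [simple_conj_pow]
      _ = ((s i * s i') ^ n)⁻¹ * s i' := by
          rw [hk, pow_add, mul_inv_rev, mul_assoc]
  · obtain ⟨k, hk⟩ := ho
    have h1 : ¬ Even n := by simp [hk, parity_simps]
    have h2 : Even (n+1) := ⟨k+1, by omega⟩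
    have h3 : (n+1)/2 = k+1 := by omega
    have h4 : n/2 = k := by omega
    rw [if_neg h1, if_pos h2, h3, h4, one_mul, mul_inv_rev, cs.inv_simple]
    calc ((s i * s i') ^ k)⁻¹ * s i' * (s i * s i') ^ (k+1)
        = ((s i * s i') ^ k)⁻¹ * (s i' * (s i * s i') ^ (k+1)) := by rw [mul_assoc]
      _ = ((s i * s i') ^ k)⁻¹ * (((s i * s i') ^ (k+1))⁻¹ * s i') := by
          rw [simple_conj_pow]
      _ = ((s i * s i') ^ n)⁻¹ * s i' := by
          rw [show n = (k+1) + k by omega]; group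

lemma ris_alt (i i' : B) (n : ℕ) :
    cs.rightInvSeq (alternatingWord i i' n)
      = ((List.range n).reverse).map (fun j => ((s i * s i') ^ j)⁻¹ * s i') := by
  induction n with
  | zero => simp [alternatingWord]
  | succ n ih =>
    rw [alternatingWord_succ']
    have hcons : cs.rightInvSeq ((if Even n then i' else i) :: alternatingWord i i' n)
        = ((π (alternatingWord i i' n))⁻¹ * s (if Even n then i' else i)
            * π (alternatingWord i i' n)) :: cs.rightInvSeq (alternatingWord i i' n) := rfl
    rw [hcons, ih]
    have hhead : (π (alternatingWord i i' n))⁻¹ * s (if Even n then i' else i)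
        * π (alternatingWord i i' n) = ((s i * s i') ^ n)⁻¹ * s i' := by
      rw [mul_assoc, ← cs.wordProd_cons, ← alternatingWord_succ']
      exact key_conj cs i i' n
    rw [hhead]
    rw [List.range_succ, List.reverse_append]
    simp

lemma count_even (i i' : B) (m : ℕ) (hq : (s i * s i') ^ m = 1) (t : W) :
    Even (List.count t (cs.rightInvSeq (alternatingWord i i' (2 * m)))) := by
  rw [ris_alt, List.map_reverse, List.count_reverse,
    show 2 * m = m + m by ring, List.range_add, List.map_append, List.count_append,
    List.map_map]
  have hmap : (List.range m).map ((fun j => ((s i * s i') ^ j)⁻¹ * s i') ∘ (m + ·))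
      = (List.range m).map (fun j => ((s i * s i') ^ j)⁻¹ * s i') := by
    apply List.map_congr_left
    intro j _
    simp only [Function.comp_apply]
    rw [pow_add, hq, one_mul]
  rw [hmap]
  exact ⟨_, rfl⟩

lemma alternatingWord_two_step (i i' : B) (m : ℕ) :
    alternatingWord i i' (2*m + 2) = i :: i' :: alternatingWord i i' (2*m) := by
  have h2 : Even (2*m) := ⟨m, by ring⟩
  have h1 : ¬ Even (2*m+1) := fun h => (Nat.even_add_one.mp h) h2
  rw [show 2*m+2 = (2*m+1)+1 by ring, alternatingWord_succ' i i' (2*m+1),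
    alternatingWord_succ' i i' (2*m), if_neg h1, if_pos h2]

lemma F_alt (i i' : B) (m : ℕ) :
    F cs (alternatingWord i i' (2*m)) = (tok cs i * tok cs i')^m := by
  induction m with
  | zero => simp [alternatingWord]; rfl
  | succ m ih =>
    rw [show 2*(m+1) = 2*m+2 by ring, alternatingWord_two_step, F_cons, F_cons, ih,
      pow_succ', mul_assoc]

lemma liftable : M.IsLiftable (fun i => tok cs i) := by
  intro i i'
  have hq : (s i * s i')^(M i i') = 1 := cs.simple_mul_simple_pow i i'
  show (tok cs i * tok cs i') ^ M i i' = 1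
  rw [← F_alt]
  apply Equiv.ext
  rintro ⟨t, ε⟩
  rw [F_apply]
  have hπ : π (alternatingWord i i' (2 * M i i')) = 1 := by
    rw [cs.prod_alternatingWord_eq_mul_pow, if_pos ⟨M i i', by ring⟩,
      show 2 * M i i' / 2 = M i i' by omega, one_mul, hq]
  have he := count_even cs i i' (M i i') hq t
  rw [hπ, Even.neg_one_pow he]
  simp

noncomputable def Phi : W →* Equiv.Perm (W × ℤˣ) :=
  CoxeterSystem.lift cs ⟨fun i => tok cs i, liftable cs⟩

lemma Phi_simple (i : B) : Phi cs (s i) = tok cs i :=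
  cs.lift_apply_simple (liftable cs) i

lemma Phi_wordProd (ω : List B) : Phi cs (π ω) = F cs ω := by
  induction ω with
  | nil => rw [cs.wordProd_nil, map_one, F_nil]
  | cons i ω ih => rw [cs.wordProd_cons, map_mul, Phi_simple, F_cons, ih]

/-- The Bourbaki sign cocycle. -/
noncomputable def nsgn (w t : W) : ℤˣ := (Phi cs w (t, 1)).2

lemma Phi_apply (w t : W) (ε : ℤˣ) :
    Phi cs w (t, ε) = (w * t * w⁻¹, ε * nsgn cs w t) := by
  obtain ⟨ω, rfl⟩ := cs.wordProd_surjective w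
  unfold nsgn
  rw [Phi_wordProd, F_apply, F_apply]
  simp

lemma nsgn_mul (u v t : W) : nsgn cs (u*v) t = nsgn cs u (v*t*v⁻¹) * nsgn cs v t := by
  have h : Phi cs (u*v) (t,1) = Phi cs u (Phi cs v (t,1)) := by rw [map_mul]; rfl
  rw [Phi_apply, Phi_apply, Phi_apply] at h
  have h2 := congrArg Prod.snd h
  simp only [one_mul] at h2
  rw [h2, mul_comm]

lemma nsgn_simple (i : B) (t : W) :
    nsgn cs (s i) t = if t = s i then -1 else 1 := by
  unfold nsgn
  rw [Phi_simple, tok_apply, one_mul]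

lemma nsgn_units (w t : W) : nsgn cs w t = 1 ∨ nsgn cs w t = -1 :=
  Int.units_eq_one_or _

lemma nsgn_inv_mul_cancel (w t : W) : nsgn cs w⁻¹ (w * t * w⁻¹) * nsgn cs w t = 1 := by
  have := nsgn_mul cs w⁻¹ w t
  rw [inv_mul_cancel] at this
  rw [← this]
  unfold nsgn
  rw [map_one]
  rfl

lemma nsgn_refl_self {t : W} (ht : cs.IsReflection t) : nsgn cs t t = -1 := by
  obtain ⟨w, i, rfl⟩ := ht
  set t := w * s i * w⁻¹ with hdef
  have h1 : nsgn cs t t = nsgn cs w ((s i * w⁻¹) * t * (s i * w⁻¹)⁻¹) *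
      nsgn cs (s i * w⁻¹) t := by
    rw [← nsgn_mul, hdef, mul_assoc]
  have e1 : (s i * w⁻¹) * t * (s i * w⁻¹)⁻¹ = s i := by
    rw [hdef, mul_inv_rev, inv_inv, cs.inv_simple]
    calc s i * w⁻¹ * (w * s i * w⁻¹) * (w * s i)
        = s i * (w⁻¹ * w) * s i * (w⁻¹ * w) * s i := by group
      _ = s i := by
          rw [inv_mul_cancel, mul_one, mul_one, mul_assoc, cs.simple_mul_simple_self, mul_one]
  have h2 : nsgn cs (s i * w⁻¹) t = nsgn cs (s i) (w⁻¹ * t * w) * nsgn cs w⁻¹ t := by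
    have := nsgn_mul cs (s i) w⁻¹ t
    rwa [inv_inv] at this
  have e2 : w⁻¹ * t * w = s i := by
    rw [hdef]
    calc w⁻¹ * (w * s i * w⁻¹) * w = (w⁻¹ * w) * s i * (w⁻¹ * w) := by group
      _ = s i := by rw [inv_mul_cancel, one_mul, mul_one]
  have h3 : nsgn cs w⁻¹ t * nsgn cs w (s i) = 1 := by
    have := nsgn_inv_mul_cancel cs w (s i)
    rwa [← hdef] at this
  have hc : nsgn cs w (s i) * (-1 * nsgn cs w⁻¹ t)
      = -1 * (nsgn cs w⁻¹ t * nsgn cs w (s i)) := by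
    rw [mul_comm, mul_assoc]
  rw [h1, h2, e1, e2, nsgn_simple, if_pos rfl, hc, h3, mul_one]

lemma one_ne_neg_one : (1 : ℤˣ) ≠ -1 := by decide

theorem nsgn_eq_neg_one_iff (N : ℕ) :
    ∀ w : W, ℓ w ≤ N → ∀ t : W, cs.IsReflection t →
      (nsgn cs w t = -1 ↔ ℓ (w * t) < ℓ w) := by
  induction N with
  | zero =>
    intro w hw t ht
    have hw1 : w = 1 := cs.length_eq_zero_iff.mp (Nat.le_zero.mp hw)
    subst hw1
    constructor
    · intro h
      exfalso
      apply one_ne_neg_one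
      rw [← h]
      unfold nsgn
      rw [map_one]
      rfl
    · intro h
      simp [cs.length_one] at h
  | succ N ih =>
    intro w hw t ht
    by_cases hw1 : w = 1
    · subst hw1
      constructor
      · intro h
        exfalso
        apply one_ne_neg_one
        rw [← h]
        unfold nsgn
        rw [map_one]
        rfl
      · intro h
        simp [cs.length_one] at h
    · obtain ⟨i, hi⟩ := cs.exists_rightDescent_of_ne_one hw1
      have hlen : ℓ (w * s i) + 1 = ℓ w := cs.isRightDescent_iff.mp hi
      set u := w * s i with hu
      have hui : u * s i = w := by rw [hu, cs.simple_mul_simple_cancel_right]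
      have hlu : ℓ u ≤ N := by omega
      have hdec : nsgn cs w t = nsgn cs u (s i * t * (s i)⁻¹) * nsgn cs (s i) t := by
        rw [← hui, nsgn_mul]
      by_cases hts : t = s i
      · have e1 : s i * t * (s i)⁻¹ = t := by
          rw [hts, cs.inv_simple, cs.simple_mul_simple_self, one_mul]
        have h2 : nsgn cs u t = 1 := by
          rcases nsgn_units cs u t with h | h
          · exact h
          · exfalso
            have hlt := (ih u hlu t ht).mp h
            rw [hts, hui] at hlt
            omega
        constructor
        · intro _
          rw [hts]
          exact hi
        · intro _
          rw [hdec, e1, h2, nsgn_simple, if_pos hts, one_mul]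
      · have ht' : cs.IsReflection (s i * t * (s i)⁻¹) := ht.conj (s i)
        have hdec2 : nsgn cs w t = nsgn cs u (s i * t * (s i)⁻¹) := by
          rw [hdec, nsgn_simple, if_neg hts, mul_one]
        have hut' : u * (s i * t * (s i)⁻¹) = w * t * s i := by
          rw [hu, cs.inv_simple]
          calc w * s i * (s i * t * s i) = w * (s i * s i) * t * s i := by group
            _ = w * t * s i := by rw [cs.simple_mul_simple_self, mul_one]
        constructor
        · intro hL
          have h3 : ℓ (u * (s i * t * (s i)⁻¹)) < ℓ u :=
            (ih u hlu _ ht').mp (hdec2 ▸ hL)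
          rw [hut'] at h3
          have h4 : ℓ (w * t) ≤ ℓ (w * t * s i) + 1 := by
            rcases cs.length_mul_simple (w * t) i with h | h <;> omega
          omega
        · intro hR
          set v := w * t with hv
          have hvt : v * t = w := by
            rw [hv, mul_assoc, ht.mul_self, mul_one]
          have hlv : ℓ v ≤ N := by omega
          have h3 : nsgn cs v t = 1 := by
            rcases nsgn_units cs v t with h | h
            · exact h
            · exfalso
              have := (ih v hlv t ht).mp h
              rw [hvt] at this
              omega
          have e3 : t * t * t⁻¹ = t := by
            rw [ht.mul_self, one_mul, ht.inv]
          have h4 : nsgn cs w t = nsgn cs v (t * t * t⁻¹) * nsgn cs t t := by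
            rw [← hvt, nsgn_mul]
          rw [h4, e3, h3, one_mul, nsgn_refl_self cs ht]

end CoxeterCenter

/-- **Theorem (Hosaka).** Let `(W, S)` be a Coxeter system with `S` finite. Then the
center `Z(W)` of the Coxeter group `W` is a finite group. -/
theorem center_of_coxeter_group_finite {B : Type*} [Finite B] {W : Type*} [Group W]
    (M : CoxeterMatrix B) (cs : CoxeterSystem M W) :
    Finite (Subgroup.center W) := by
  classical
  let φ : Subgroup.center W → (B → ℤˣ) :=
    fun z i => CoxeterCenter.nsgn cs (z : W) (cs.simple i)
  have hinj : Function.Injective φ := by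
    intro z z' hzz
    have hz' := z'.2
    rw [Subgroup.mem_center_iff] at hz'
    by_contra hne
    set g : W := (z : W) * (z' : W)⁻¹ with hg
    have hgne : g ≠ 1 := by
      intro h
      exact hne (Subtype.ext (mul_inv_eq_one.mp h))
    obtain ⟨i, hi⟩ := cs.exists_rightDescent_of_ne_one hgne
    have h1 : CoxeterCenter.nsgn cs g (cs.simple i) = -1 :=
      (CoxeterCenter.nsgn_eq_neg_one_iff cs (cs.length g) g le_rfl (cs.simple i)
        (cs.isReflection_simple i)).mpr hi
    have hc1 : (z' : W)⁻¹ * cs.simple i * ((z' : W)⁻¹)⁻¹ = cs.simple i := by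
      rw [inv_inv, mul_assoc, hz' (cs.simple i), ← mul_assoc, inv_mul_cancel, one_mul]
    have hc2 : (z' : W) * cs.simple i * (z' : W)⁻¹ = cs.simple i := by
      rw [← hz' (cs.simple i), mul_assoc, mul_inv_cancel, mul_one]
    have h2 : CoxeterCenter.nsgn cs g (cs.simple i)
        = CoxeterCenter.nsgn cs (z : W) (cs.simple i)
          * CoxeterCenter.nsgn cs ((z' : W)⁻¹) (cs.simple i) := by
      rw [hg, CoxeterCenter.nsgn_mul, hc1]
    have h3 : CoxeterCenter.nsgn cs ((z' : W)⁻¹) (cs.simple i)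
        * CoxeterCenter.nsgn cs (z' : W) (cs.simple i) = 1 := by
      have h := CoxeterCenter.nsgn_inv_mul_cancel cs (z' : W) (cs.simple i)
      rwa [hc2] at h
    have heq : CoxeterCenter.nsgn cs (z : W) (cs.simple i)
        = CoxeterCenter.nsgn cs (z' : W) (cs.simple i) := congrFun hzz i
    have : (-1 : ℤˣ) = 1 := by
      rw [← h1, h2, heq, mul_comm]
      exact h3
    exact CoxeterCenter.one_ne_neg_one this.symm
  exact Finite.of_injective φ hinj
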